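/- With M = var[U(S)]⁻¹ cov[U(S), X_S], one has Mᵀ U(s) = μ_s − μ̄ for every s ∈ {1,…,S̄}; consequently the SEO forecast Ŷ_SEO(x,s) = α_F + β_Fᵀ(x − Mᵀ U(s)) equals α_F + β_Fᵀ(x − μ_s + μ̄), and Ŷ_SEO(X_S, S) is the linear projection of Y_S onto the span of a constant and X_S − μ_S. -/

import Mathlib

open MeasureTheory Matrix Finset

lemma mulL2 {Ω : Type*} [MeasurableSpace Ω] {P : Measure Ω} {u v : Ω → ℝ}
    (hu : MemLp u 2 P) (hv : MemLp v 2 P) :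
    Integrable (fun ω => u ω * v ω) P := by
  have h := hv.smul hu (p := 2) (q := 2) (r := 1)
  rw [← memLp_one_iff_integrable]
  exact h

lemma fiberSum {Ω : Type*} [MeasurableSpace Ω] {P : Measure Ω} {m : ℕ}
    {S : Ω → Fin m} (hS : Measurable S) {f : Ω → ℝ} (hf : Integrable f P) :
    ∫ ω, f ω ∂P = ∑ s, ∫ ω in {ω | S ω = s}, f ω ∂P := by
  have hms : ∀ s : Fin m, MeasurableSet {ω | S ω = s} := fun s =>
    hS (measurableSet_singleton s)
  have hcov : ⋃ s, {ω | S ω = s} = Set.univ := by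
    ext ω; simp [Set.mem_iUnion]
  rw [← setIntegral_univ (f := f) (μ := P), ← hcov,
    integral_iUnion_fintype hms ?_ fun s => hf.integrableOn]
  intro s t hst
  simp only [Function.onFun, Set.disjoint_left]
  rintro ω rfl h2; exact hst h2

lemma intComp {Ω : Type*} [MeasurableSpace Ω] {P : Measure Ω} [IsFiniteMeasure P]
    {m : ℕ} {S : Ω → Fin m} (hS : Measurable S) (g : Fin m → ℝ) :
    Integrable (fun ω => g (S ω)) P := by
  have hmeas : Measurable fun ω => g (S ω) := (measurable_from_top (f := g)).comp hS
  have hb : ∀ ω, ‖g (S ω)‖ ≤ ∑ s, ‖g s‖ := fun ω =>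
    Finset.single_le_sum (f := fun s => ‖g s‖) (fun s _ => norm_nonneg _) (mem_univ _)
  exact (memLp_top_of_bound hmeas.aestronglyMeasurable _
    (Filter.Eventually.of_forall hb)).integrable le_top

/-- With `M = var[U(S)]⁻¹ cov[U(S), X_S]`, one has `MᵀU(s) = μ_s − μ̄` for every bank `s`;
hence the SEO forecast `Ŷ_SEO(x,s) = α_F + β_Fᵀ(x − MᵀU(s))` equals
`α_F + β_Fᵀ(x − μ_s + μ̄)`, and `Ŷ_SEO(X_S, S)` is the linear projection of `Y_S` onto the
span of a constant and `X_S − μ_S`. -/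
theorem stmt7
    {Ω : Type*} [MeasurableSpace Ω] (P : Measure Ω) [IsProbabilityMeasure P]
    (n d : ℕ) (S : Ω → Fin (n + 1)) (hS : Measurable S)
    (X : Ω → Fin d → ℝ) (Y : Ω → ℝ) (ε : Ω → ℝ)
    (p : Fin (n + 1) → ℝ) (μv : Fin (n + 1) → Fin d → ℝ)
    (Sig : Fin (n + 1) → Matrix (Fin d) (Fin d) ℝ)
    (αb : Fin (n + 1) → ℝ) (βb : Fin (n + 1) → Fin d → ℝ)
    (hp : ∀ s, 0 < p s)
    (hmeas : ∀ s, P {ω | S ω = s} = ENNReal.ofReal (p s))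
    (hmean : ∀ s i, ∫ ω in {ω | S ω = s}, X ω i ∂P = p s * μv s i)
    (hcovX : ∀ s i j,
      ∫ ω in {ω | S ω = s}, (X ω i - μv s i) * (X ω j - μv s j) ∂P = p s * Sig s i j)
    (hSigPD : ∀ s, (Sig s).PosDef)
    (hY : ∀ ω, Y ω = αb (S ω) + βb (S ω) ⬝ᵥ X ω + ε ω)
    (hε : ∀ s, ∫ ω in {ω | S ω = s}, ε ω ∂P = 0)
    (hXε : ∀ s i, ∫ ω in {ω | S ω = s}, (X ω i - μv s i) * ε ω ∂P = 0)
    (μbar : Fin d → ℝ) (hμbar : μbar = ∑ s, p s • μv s)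
    -- centered bank dummies, as deterministic functions of the bank label
    (Uq : Fin n → Fin (n + 1) → ℝ)
    (hUq : ∀ i s, Uq i s = (if s = i.castSucc then 1 else 0) - p i.castSucc)
    (U : Fin n → Ω → ℝ) (hU : ∀ i ω, U i ω = Uq i (S ω))
    -- M = var[U(S)]⁻¹ cov[U(S), X_S]
    (VarU : Matrix (Fin n) (Fin n) ℝ)
    (hVarU : ∀ i j, VarU i j =
      (∫ ω, U i ω * U j ω ∂P) - (∫ ω, U i ω ∂P) * (∫ ω, U j ω ∂P))
    (covUX : Matrix (Fin n) (Fin d) ℝ)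
    (hcovUX : ∀ i j, covUX i j =
      (∫ ω, U i ω * X ω j ∂P) - (∫ ω, U i ω ∂P) * (∫ ω, X ω j ∂P))
    (M : Matrix (Fin n) (Fin d) ℝ) (hM : M = VarU⁻¹ * covUX)
    -- FEO coefficient and intercept
    (βF : Fin d → ℝ)
    (hβF : βF = (∑ s, p s • Sig s)⁻¹ *ᵥ (∑ s, p s • (Sig s *ᵥ βb s)))
    (αF : ℝ) (hαF : αF = (∫ ω, Y ω ∂P) - βF ⬝ᵥ μbar)
    (hint : ∀ (a : ℝ) (b : Fin d → ℝ),
      Integrable (fun ω => (a + b ⬝ᵥ (X ω - μv (S ω)) - Y ω) ^ 2) P) :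
    (∀ s : Fin (n + 1), Mᵀ *ᵥ (fun i => Uq i s) = μv s - μbar) ∧
    (∀ (s : Fin (n + 1)) (x : Fin d → ℝ),
      αF + βF ⬝ᵥ (x - Mᵀ *ᵥ (fun i => Uq i s)) = αF + βF ⬝ᵥ (x - μv s + μbar)) ∧
    (∀ (a : ℝ) (b : Fin d → ℝ),
      ∫ ω, (αF + βF ⬝ᵥ (X ω - Mᵀ *ᵥ (fun i => Uq i (S ω))) - Y ω) ^ 2 ∂P
        ≤ ∫ ω, (a + b ⬝ᵥ (X ω - μv (S ω)) - Y ω) ^ 2 ∂P) := by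
  classical
  -- measure basics
  have hms : ∀ s : Fin (n+1), MeasurableSet {ω | S ω = s} := fun s =>
    hS (measurableSet_singleton s)
  have hPs : ∀ s, (P {ω | S ω = s}).toReal = p s := fun s => by
    rw [hmeas s, ENNReal.toReal_ofReal (hp s).le]
  have hconst : ∀ (s : Fin (n+1)) (c : ℝ), ∫ ω in {ω | S ω = s}, c ∂P = c * p s := by
    intro s c
    rw [setIntegral_const, measureReal_def, hPs, smul_eq_mul, mul_comm]
  have hsum1 : ∑ s, p s = 1 := by
    have h1 : ∫ (_ : Ω), (1:ℝ) ∂P = 1 := by simp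
    rw [fiberSum hS (integrable_const 1)] at h1
    simp only [hconst, one_mul] at h1
    exact h1
  -- slice integrals of functions of S
  have hsliceG : ∀ (g : Fin (n+1) → ℝ) (s), ∫ ω in {ω | S ω = s}, g (S ω) ∂P = g s * p s := by
    intro g s
    rw [setIntegral_congr_fun (hms s) (g := fun _ => g s) (fun ω hω => by
      simp only [Set.mem_setOf_eq] at hω; rw [hω]), hconst]
  have hsliceGH : ∀ (g : Fin (n+1) → ℝ) (h : Ω → ℝ) (s),
      ∫ ω in {ω | S ω = s}, g (S ω) * h ω ∂P = g s * ∫ ω in {ω | S ω = s}, h ω ∂P := by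
    intro g h s
    rw [setIntegral_congr_fun (hms s) (g := fun ω => g s * h ω) (fun ω hω => by
      simp only [Set.mem_setOf_eq] at hω; rw [hω]), integral_const_mul]
  -- L2 infrastructure
  have hASM : ∀ (a : ℝ) (b : Fin d → ℝ),
      AEStronglyMeasurable (fun ω => a + b ⬝ᵥ (X ω - μv (S ω)) - Y ω) P := by
    intro a b
    have h1 := (hint (a+1) b).aestronglyMeasurable
    have h2 := (hint a b).aestronglyMeasurable
    refine ((((h1.sub h2).sub (aestronglyMeasurable_const (b := (1:ℝ)))).const_smul
      ((2:ℝ)⁻¹)).congr (Filter.Eventually.of_forall fun ω => ?_))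
    simp only [Pi.smul_apply, Pi.sub_apply, smul_eq_mul]
    ring
  have hL2 : ∀ (a : ℝ) (b : Fin d → ℝ),
      MemLp (fun ω => a + b ⬝ᵥ (X ω - μv (S ω)) - Y ω) 2 P := fun a b =>
    (memLp_two_iff_integrable_sq (hASM a b)).2 (hint a b)
  have hYL2 : MemLp Y 2 P := by
    have h := (hL2 0 0).neg
    exact h.ae_eq (Filter.Eventually.of_forall fun ω => by simp)
  have hbL2 : ∀ b : Fin d → ℝ, MemLp (fun ω => b ⬝ᵥ (X ω - μv (S ω))) 2 P := by
    intro b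
    have h := (hL2 0 b).sub (hL2 0 0)
    exact h.ae_eq (Filter.Eventually.of_forall fun ω => by simp)
  have hZL2 : ∀ i, MemLp (fun ω => X ω i - μv (S ω) i) 2 P := by
    intro i
    have h := hbL2 (Pi.single i 1)
    exact h.ae_eq (Filter.Eventually.of_forall fun ω => by
      simp [single_dotProduct])
  have hZ1 : ∀ i, Integrable (fun ω => X ω i - μv (S ω) i) P := fun i =>
    (hZL2 i).integrable one_le_two
  have hY1 : Integrable Y P := hYL2.integrable one_le_two
  have hX1 : ∀ i, Integrable (fun ω => X ω i) P := by
    intro i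
    have h := (hZ1 i).add (intComp hS (fun s => μv s i))
    exact h.congr (Filter.Eventually.of_forall fun ω => by simp)
  -- key Finset sum for Uq
  have sumUq : ∀ (q : Fin (n+1) → ℝ) (i : Fin n),
      ∑ s, Uq i s * q s = q i.castSucc - p i.castSucc * ∑ s, q s := by
    intro q i
    simp only [hUq, sub_mul, Finset.sum_sub_distrib, ite_mul, one_mul, zero_mul,
      Finset.sum_ite_eq', Finset.mem_univ, if_true, ← Finset.mul_sum]
  have hμbarj : ∀ j, μbar j = ∑ s, p s * μv s j := by
    intro j
    rw [hμbar]
    simp [Finset.sum_apply]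
  have hpcast : ∑ i : Fin n, p i.castSucc = 1 - p (Fin.last n) := by
    have := hsum1
    rw [Fin.sum_univ_castSucc] at this
    linarith
  -- expectations of U
  have hUint : ∀ i, Integrable (fun ω => U i ω) P := by
    intro i
    exact (intComp hS (Uq i)).congr (Filter.Eventually.of_forall fun ω => (hU i ω).symm)
  have hEU : ∀ i, ∫ ω, U i ω ∂P = 0 := by
    intro i
    rw [fiberSum hS (hUint i)]
    have : ∀ s : Fin (n+1), ∫ ω in {ω | S ω = s}, U i ω ∂P = Uq i s * p s := by
      intro s
      rw [setIntegral_congr_fun (hms s) (g := fun ω => Uq i (S ω))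
        (fun ω _ => hU i ω), hsliceG]
    simp only [this]
    rw [sumUq, hsum1, mul_one, sub_self]
  have hEUU : ∀ i j, ∫ ω, U i ω * U j ω ∂P =
      (if i = j then p i.castSucc else 0) - p i.castSucc * p j.castSucc := by
    intro i j
    rw [fiberSum hS (((intComp hS (fun s => Uq i s * Uq j s)).congr
      (Filter.Eventually.of_forall fun ω => by rw [hU i ω, hU j ω])))]
    have : ∀ s : Fin (n+1), ∫ ω in {ω | S ω = s}, U i ω * U j ω ∂P
        = Uq i s * (Uq j s * p s) := by
      intro s
      rw [setIntegral_congr_fun (hms s)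
        (g := fun ω => Uq i (S ω) * Uq j (S ω))
        (fun ω _ => by simp only [hU i ω, hU j ω])]
      exact Eq.trans (hsliceG (fun t => Uq i t * Uq j t) s) (by ring)
    simp only [this]
    rw [sumUq (fun s => Uq j s * p s) i]
    have h2 : ∑ s, Uq j s * p s = 0 := by
      rw [sumUq, hsum1, mul_one, sub_self]
    rw [h2, mul_zero, sub_zero, hUq]
    by_cases h : i = j
    · subst h; simp [Fin.castSucc_inj, sub_mul]
    · have : i.castSucc ≠ j.castSucc := by
        simpa [Fin.castSucc_inj] using h
      simp [this.symm, h, sub_mul, mul_comm]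
  have hEUX : ∀ i j, ∫ ω, U i ω * X ω j ∂P
      = p i.castSucc * (μv i.castSucc j - μbar j) := by
    intro i j
    have hbdd : Integrable (fun ω => Uq i (S ω) * X ω j) P :=
      (hX1 j).bdd_mul ((measurable_from_top (f := Uq i)).comp hS).aestronglyMeasurable
        (Filter.Eventually.of_forall fun ω => Finset.single_le_sum
          (f := fun s => ‖Uq i s‖) (fun s _ => norm_nonneg _) (mem_univ _))
    have hint2 : Integrable (fun ω => U i ω * X ω j) P :=
      hbdd.congr (Filter.Eventually.of_forall fun ω => by simp only [hU])
    rw [fiberSum hS hint2]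
    have : ∀ s : Fin (n+1), ∫ ω in {ω | S ω = s}, U i ω * X ω j ∂P
        = Uq i s * (p s * μv s j) := by
      intro s
      rw [setIntegral_congr_fun (hms s) (g := fun ω => Uq i (S ω) * X ω j)
        (fun ω _ => by simp only [hU]), hsliceGH, hmean]
    simp only [this]
    rw [sumUq (fun s => p s * μv s j) i, ← hμbarj j]
    ring
  -- explicit entries of VarU and covUX
  have hVarU' : ∀ i j, VarU i j =
      (if i = j then p i.castSucc else 0) - p i.castSucc * p j.castSucc := by
    intro i j
    rw [hVarU, hEU, hEU, mul_zero, sub_zero, hEUU]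
  have hcovUX' : ∀ i j, covUX i j = p i.castSucc * (μv i.castSucc j - μbar j) := by
    intro i j
    rw [hcovUX, hEU, zero_mul, sub_zero, hEUX]
  -- the explicit solution N and the explicit inverse W
  set N : Matrix (Fin n) (Fin d) ℝ :=
    Matrix.of (fun i j => μv i.castSucc j - μv (Fin.last n) j) with hN
  set W : Matrix (Fin n) (Fin n) ℝ :=
    Matrix.of (fun i j => (if i = j then (p i.castSucc)⁻¹ else 0) + (p (Fin.last n))⁻¹)
      with hW
  have hWVar : W * VarU = 1 := by
    ext i j
    rw [Matrix.mul_apply]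
    have hsplit : ∀ k, W i k * VarU k j
        = (if i = k then (p i.castSucc)⁻¹ * VarU k j else 0) + (p (Fin.last n))⁻¹ * VarU k j := by
      intro k
      rw [hW]
      simp only [Matrix.of_apply, add_mul, ite_mul, zero_mul]
    simp only [hsplit]
    rw [Finset.sum_add_distrib, Finset.sum_ite_eq, if_pos (mem_univ i), ← Finset.mul_sum]
    have hsumVar : ∑ k, VarU k j = p (Fin.last n) * p j.castSucc := by
      simp only [hVarU']
      rw [Finset.sum_sub_distrib, Finset.sum_ite_eq', if_pos (mem_univ j),
        ← Finset.sum_mul, hpcast]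
      ring
    rw [hsumVar, hVarU' i j, Matrix.one_apply]
    have hpi := (hp i.castSucc).ne'
    have hpl := (hp (Fin.last n)).ne'
    by_cases h : i = j
    · subst h; field_simp; simp
    · simp only [h, if_false]
      field_simp
      ring
  have hVN : VarU * N = covUX := by
    ext i j
    rw [Matrix.mul_apply, hcovUX']
    simp only [hVarU', hN, Matrix.of_apply, sub_mul, ite_mul, zero_mul]
    rw [Finset.sum_sub_distrib, Finset.sum_ite_eq, if_pos (mem_univ i)]
    have h2 : ∑ k : Fin n, p i.castSucc * p k.castSucc * (μv k.castSucc j - μv (Fin.last n) j)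
        = p i.castSucc * (μbar j - μv (Fin.last n) j) := by
      have h3 : ∑ k : Fin n, p k.castSucc * μv k.castSucc j
          = μbar j - p (Fin.last n) * μv (Fin.last n) j := by
        have := hμbarj j
        rw [Fin.sum_univ_castSucc] at this
        linarith
      calc ∑ k : Fin n, p i.castSucc * p k.castSucc * (μv k.castSucc j - μv (Fin.last n) j)
          = p i.castSucc * ∑ k : Fin n,
              (p k.castSucc * μv k.castSucc j - p k.castSucc * μv (Fin.last n) j) := by
            rw [Finset.mul_sum]
            exact Finset.sum_congr rfl fun k _ => by ring
        _ = p i.castSucc * ((∑ k : Fin n, p k.castSucc * μv k.castSucc j)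
              - (∑ k : Fin n, p k.castSucc) * μv (Fin.last n) j) := by
            rw [Finset.sum_sub_distrib, Finset.sum_mul]
        _ = p i.castSucc * (μbar j - μv (Fin.last n) j) := by
            rw [h3, hpcast]; ring
    rw [h2]
    ring
  have hMN : M = N := by
    have hdet : IsUnit VarU.det :=
      Matrix.isUnit_det_of_left_inverse hWVar
    rw [hM, ← hVN, ← Matrix.mul_assoc, Matrix.nonsing_inv_mul _ hdet, Matrix.one_mul]
  -- Part 1
  have part1 : ∀ s : Fin (n + 1), Mᵀ *ᵥ (fun i => Uq i s) = μv s - μbar := by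
    intro s
    funext j
    have hmv : (Mᵀ *ᵥ (fun i => Uq i s)) j = ∑ i, N i j * Uq i s := by
      rw [hMN]
      simp [Matrix.mulVec, dotProduct, Matrix.transpose_apply]
    rw [hmv]
    have hexp : ∀ i : Fin n, N i j * Uq i s
        = (if s = i.castSucc then μv i.castSucc j - μv (Fin.last n) j else 0)
          - (μv i.castSucc j - μv (Fin.last n) j) * p i.castSucc := by
      intro i
      rw [hN, hUq]
      simp only [Matrix.of_apply, mul_sub, mul_ite, mul_one, mul_zero]
    simp only [hexp]
    rw [Finset.sum_sub_distrib]
    have hsecond : ∑ i : Fin n, (μv i.castSucc j - μv (Fin.last n) j) * p i.castSucc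
        = μbar j - μv (Fin.last n) j := by
      have h3 : ∑ k : Fin n, p k.castSucc * μv k.castSucc j
          = μbar j - p (Fin.last n) * μv (Fin.last n) j := by
        have := hμbarj j
        rw [Fin.sum_univ_castSucc] at this
        linarith
      calc ∑ i : Fin n, (μv i.castSucc j - μv (Fin.last n) j) * p i.castSucc
          = (∑ k : Fin n, p k.castSucc * μv k.castSucc j)
            - (∑ k : Fin n, p k.castSucc) * μv (Fin.last n) j := by
            rw [Finset.sum_mul, ← Finset.sum_sub_distrib]
            refine Finset.sum_congr rfl fun k _ => by ring
        _ = μbar j - μv (Fin.last n) j := by rw [h3, hpcast]; ring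
    rw [hsecond]
    induction s using Fin.lastCases with
    | last =>
      have hne : ∀ i : Fin n, Fin.last n ≠ i.castSucc := fun i =>
        (Fin.castSucc_lt_last i).ne'
      simp only [hne, if_false, Finset.sum_const_zero, Pi.sub_apply]
      ring
    | cast t =>
      simp only [Fin.castSucc_inj]
      rw [Finset.sum_ite_eq univ t (fun i => μv i.castSucc j - μv (Fin.last n) j),
        if_pos (mem_univ t)]
      simp only [Pi.sub_apply]
      ring
  -- symmetry of Sig
  have hsymm : ∀ s i j, Sig s j i = Sig s i j := fun s i j => by
    simpa using (hSigPD s).isHermitian.apply i j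
  -- mulVec of the weighted sum
  have hsum_mulVec : ∀ (x : Fin d → ℝ),
      (∑ s, p s • Sig s) *ᵥ x = ∑ s, p s • (Sig s *ᵥ x) := by
    intro x
    funext i
    simp only [Matrix.mulVec, dotProduct, Finset.sum_apply, Pi.smul_apply,
      Matrix.sum_apply, Matrix.smul_apply, smul_eq_mul, Finset.sum_mul, Finset.mul_sum]
    rw [Finset.sum_comm]
    exact Finset.sum_congr rfl fun s _ => Finset.sum_congr rfl fun j _ => by ring
  -- the weighted covariance matrix is positive definite
  have hAPD : (∑ s, p s • Sig s).PosDef := by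
    refine Matrix.posDef_iff_dotProduct_mulVec.mpr ⟨?_, ?_⟩
    · show (∑ s, p s • Sig s)ᴴ = ∑ s, p s • Sig s
      rw [Matrix.conjTranspose_sum]
      refine Finset.sum_congr rfl fun s _ => ?_
      rw [Matrix.conjTranspose_smul, (hSigPD s).isHermitian.eq]
      simp
    · intro x hx
      have h2 : star x ⬝ᵥ ((∑ s, p s • Sig s) *ᵥ x)
          = ∑ s, p s * (star x ⬝ᵥ (Sig s *ᵥ x)) := by
        rw [hsum_mulVec]
        simp only [dotProduct, Finset.sum_apply, Pi.smul_apply, smul_eq_mul,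
          Finset.mul_sum]
        rw [Finset.sum_comm]
        refine Finset.sum_congr rfl fun s _ => Finset.sum_congr rfl fun j _ => by ring
      rw [h2]
      exact Finset.sum_pos (fun s _ => mul_pos (hp s) ((hSigPD s).dotProduct_mulVec_pos hx))
        Finset.univ_nonempty
  have hAdet : IsUnit (∑ s, p s • Sig s).det :=
    (Matrix.isUnit_iff_isUnit_det _).1 hAPD.isUnit
  have hAv : (∑ s, p s • Sig s) *ᵥ βF = ∑ s, p s • (Sig s *ᵥ βb s) := by
    rw [hβF, Matrix.mulVec_mulVec, Matrix.mul_nonsing_inv _ hAdet, Matrix.one_mulVec]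
  have hkey : ∀ i, ∑ s, p s * ((Sig s *ᵥ βF) i - (Sig s *ᵥ βb s) i) = 0 := by
    intro i
    have h1 : (∑ s, p s • (Sig s *ᵥ βF)) i = (∑ s, p s • (Sig s *ᵥ βb s)) i := by
      rw [← hsum_mulVec, hAv]
    simp only [Finset.sum_apply, Pi.smul_apply, smul_eq_mul] at h1
    simp only [mul_sub, Finset.sum_sub_distrib, h1, sub_self]
  -- slice means of centered X
  have hSZ : ∀ s i, ∫ ω in {ω | S ω = s}, (X ω i - μv s i) ∂P = 0 := by
    intro s i
    rw [integral_sub ((hX1 i).integrableOn)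
      (integrable_const (μ := P.restrict {ω | S ω = s}) (μv s i)), hmean]
    have := hconst s (μv s i)
    rw [this]
    ring
  have hEZ : ∀ i, ∫ ω, (X ω i - μv (S ω) i) ∂P = 0 := by
    intro i
    rw [fiberSum hS (hZ1 i)]
    refine Finset.sum_eq_zero fun s _ => ?_
    rw [setIntegral_congr_fun (hms s) (g := fun ω => X ω i - μv s i) (fun ω hω => by
      simp only [Set.mem_setOf_eq] at hω; rw [hω])]
    exact hSZ s i
  have hEbZ : ∀ b : Fin d → ℝ, ∫ ω, b ⬝ᵥ (X ω - μv (S ω)) ∂P = 0 := by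
    intro b
    have hpt : ∀ ω, b ⬝ᵥ (X ω - μv (S ω)) = ∑ i, b i * (X ω i - μv (S ω) i) := fun ω => rfl
    simp only [hpt]
    rw [integral_finset_sum univ (fun i _ => ((hZ1 i).const_mul (b i)))]
    simp [integral_const_mul, hEZ]
  -- the SEO residual
  set Ybar : ℝ := ∫ ω, Y ω ∂P with hYbar
  set Fs : Ω → ℝ := fun ω => Ybar + βF ⬝ᵥ (X ω - μv (S ω)) - Y ω with hFs
  have hFsL2 : MemLp Fs 2 P := hL2 Ybar βF
  have hFs1 : Integrable Fs P := hFsL2.integrable one_le_two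
  have hEFs : ∫ ω, Fs ω ∂P = 0 := by
    have h1 : Integrable (fun ω => Ybar + βF ⬝ᵥ (X ω - μv (S ω))) P :=
      (integrable_const _).add ((hbL2 βF).integrable one_le_two)
    show ∫ ω, (Ybar + βF ⬝ᵥ (X ω - μv (S ω)) - Y ω) ∂P = 0
    rw [integral_sub h1 hY1, integral_add (integrable_const _)
      ((hbL2 βF).integrable one_le_two), hEbZ, integral_const]
    simp [hYbar]
  -- L2 membership of shifted coordinates
  have hXc2 : ∀ (j : Fin d) (c : ℝ), MemLp (fun ω => X ω j - c) 2 P := by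
    intro j c
    have hg : MemLp (fun ω => μv (S ω) j - c) 2 P := by
      refine (memLp_top_of_bound
        ((measurable_from_top (f := fun t => μv t j - c)).comp hS).aestronglyMeasurable
        (∑ s, ‖μv s j - c‖) (Filter.Eventually.of_forall fun ω =>
          Finset.single_le_sum (f := fun s => ‖μv s j - c‖)
            (fun s _ => norm_nonneg _) (mem_univ _))).mono_exponent le_top
    have h := (hZL2 j).add hg
    exact h.ae_eq (Filter.Eventually.of_forall fun ω => by simp)
  -- slice integrals of the residual against centered X
  have hEFsZ : ∀ i, ∫ ω, Fs ω * (X ω i - μv (S ω) i) ∂P = 0 := by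
    intro i
    rw [fiberSum hS (mulL2 hFsL2 (hZL2 i))]
    have hslice3 : ∀ s, ∫ ω in {ω | S ω = s}, Fs ω * (X ω i - μv (S ω) i) ∂P
        = p s * ((Sig s *ᵥ βF) i - (Sig s *ᵥ βb s) i) := by
      intro s
      set c : ℝ := Ybar - αb s - βb s ⬝ᵥ μv s with hc
      have claim : ∀ ω ∈ {ω | S ω = s}, Fs ω * (X ω i - μv (S ω) i)
          = c * (X ω i - μv s i)
            + (∑ j, (βF j - βb s j) * ((X ω j - μv s j) * (X ω i - μv s i)))
            - (X ω i - μv s i) * ε ω := by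
        intro ω hω
        simp only [Set.mem_setOf_eq] at hω
        have hs1 : ∑ j, (βF j - βb s j) * ((X ω j - μv s j) * (X ω i - μv s i))
            = ((βF - βb s) ⬝ᵥ (X ω - μv s)) * (X ω i - μv s i) := by
          simp [dotProduct, Finset.sum_mul, Pi.sub_apply, mul_assoc]
        rw [hs1, hFs]
        simp only [hω, hY ω]
        rw [sub_dotProduct, dotProduct_sub, dotProduct_sub, hc]
        ring
      -- integrability of the pieces
      have hWi : IntegrableOn (fun ω => X ω i - μv s i) {ω | S ω = s} P :=
        ((hXc2 i (μv s i)).integrable one_le_two).integrableOn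
      have hWjWi : ∀ j, IntegrableOn (fun ω => (X ω j - μv s j) * (X ω i - μv s i))
          {ω | S ω = s} P := fun j =>
        (mulL2 (hXc2 j (μv s j)) (hXc2 i (μv s i))).integrableOn
      have hsum : IntegrableOn (fun ω => c * (X ω i - μv s i)
          + ∑ j, (βF j - βb s j) * ((X ω j - μv s j) * (X ω i - μv s i)))
          {ω | S ω = s} P :=
        (hWi.const_mul c).add (integrable_finset_sum univ fun j _ =>
          (hWjWi j).const_mul _)
      have hFsWi : IntegrableOn (fun ω => Fs ω * (X ω i - μv (S ω) i))
          {ω | S ω = s} P := (mulL2 hFsL2 (hZL2 i)).integrableOn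
      have hIεW : IntegrableOn (fun ω => (X ω i - μv s i) * ε ω) {ω | S ω = s} P := by
        refine IntegrableOn.congr_fun (hsum.sub hFsWi) (fun ω hω => ?_) (hms s)
        have := claim ω hω
        simp only [Pi.add_apply, Pi.sub_apply]
        linarith
      rw [setIntegral_congr_fun (hms s) claim, integral_sub hsum hIεW,
        integral_add (hWi.const_mul c) (integrable_finset_sum univ fun j _ =>
          (hWjWi j).const_mul _), integral_finset_sum univ (fun j _ =>
          (hWjWi j).const_mul _)]
      simp only [integral_const_mul]
      rw [hSZ s i, hXε s i, mul_zero, sub_zero, zero_add]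
      simp only [hcovX s]
      calc ∑ j, (βF j - βb s j) * (p s * Sig s j i)
          = ∑ j, p s * (Sig s i j * βF j - Sig s i j * βb s j) :=
            Finset.sum_congr rfl fun j _ => by rw [hsymm s i j]; ring
        _ = p s * ((Sig s *ᵥ βF) i - (Sig s *ᵥ βb s) i) := by
            rw [← Finset.mul_sum]
            congr 1
            simp [Matrix.mulVec, dotProduct, Finset.sum_sub_distrib]
    simp only [hslice3]
    exact hkey i
  -- orthogonality of the residual to all linear forecasts
  have hortho : ∀ (a : ℝ) (b : Fin d → ℝ),
      ∫ ω, Fs ω * ((a - Ybar) + (b - βF) ⬝ᵥ (X ω - μv (S ω))) ∂P = 0 := by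
    intro a b
    have hpt : ∀ ω, Fs ω * ((a - Ybar) + (b - βF) ⬝ᵥ (X ω - μv (S ω)))
        = (a - Ybar) * Fs ω + ∑ i, (b i - βF i) * (Fs ω * (X ω i - μv (S ω) i)) := by
      intro ω
      have h0 : (b - βF) ⬝ᵥ (X ω - μv (S ω))
          = ∑ i, (b i - βF i) * (X ω i - μv (S ω) i) := rfl
      rw [h0, mul_add, Finset.mul_sum]
      congr 1
      · ring
      · exact Finset.sum_congr rfl fun i _ => by ring
    simp only [hpt]
    rw [integral_add (hFs1.const_mul _) (integrable_finset_sum univ fun i _ =>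
        (mulL2 hFsL2 (hZL2 i)).const_mul _),
      integral_finset_sum univ (fun i _ => (mulL2 hFsL2 (hZL2 i)).const_mul _)]
    simp [integral_const_mul, hEFs, hEFsZ]
  -- the main least-squares inequality
  have hmain : ∀ (a : ℝ) (b : Fin d → ℝ),
      ∫ ω, (Ybar + βF ⬝ᵥ (X ω - μv (S ω)) - Y ω) ^ 2 ∂P
        ≤ ∫ ω, (a + b ⬝ᵥ (X ω - μv (S ω)) - Y ω) ^ 2 ∂P := by
    intro a b
    have hGL2 : MemLp (fun ω => (a - Ybar) + (b - βF) ⬝ᵥ (X ω - μv (S ω))) 2 P := by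
      have h := (hL2 a b).sub (hL2 Ybar βF)
      refine h.ae_eq (Filter.Eventually.of_forall fun ω => ?_)
      simp only [Pi.sub_apply, sub_dotProduct]
      ring
    have hexp : ∀ ω, (a + b ⬝ᵥ (X ω - μv (S ω)) - Y ω) ^ 2
        = (Ybar + βF ⬝ᵥ (X ω - μv (S ω)) - Y ω) ^ 2
          + (2 * (Fs ω * ((a - Ybar) + (b - βF) ⬝ᵥ (X ω - μv (S ω))))
            + ((a - Ybar) + (b - βF) ⬝ᵥ (X ω - μv (S ω))) ^ 2) := by
      intro ω
      simp only [hFs, sub_dotProduct]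
      ring
    have hsplit : ∫ ω, (a + b ⬝ᵥ (X ω - μv (S ω)) - Y ω) ^ 2 ∂P
        = ∫ ω, (Ybar + βF ⬝ᵥ (X ω - μv (S ω)) - Y ω) ^ 2 ∂P
          + (2 * ∫ ω, Fs ω * ((a - Ybar) + (b - βF) ⬝ᵥ (X ω - μv (S ω))) ∂P
            + ∫ ω, ((a - Ybar) + (b - βF) ⬝ᵥ (X ω - μv (S ω))) ^ 2 ∂P) := by
      have hg1 : Integrable (fun ω =>
          2 * (Fs ω * ((a - Ybar) + (b - βF) ⬝ᵥ (X ω - μv (S ω))))) P :=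
        (mulL2 hFsL2 hGL2).const_mul 2
      have hg2 : Integrable (fun ω =>
          ((a - Ybar) + (b - βF) ⬝ᵥ (X ω - μv (S ω))) ^ 2) P := hGL2.integrable_sq
      have hg3 : Integrable (fun ω =>
          2 * (Fs ω * ((a - Ybar) + (b - βF) ⬝ᵥ (X ω - μv (S ω))))
            + ((a - Ybar) + (b - βF) ⬝ᵥ (X ω - μv (S ω))) ^ 2) P := hg1.add hg2
      simp only [hexp]
      rw [integral_add (hint Ybar βF) hg3, integral_add hg1 hg2, integral_const_mul]
    rw [hsplit, hortho a b, mul_zero, zero_add]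
    have h0 : 0 ≤ ∫ ω, ((a - Ybar) + (b - βF) ⬝ᵥ (X ω - μv (S ω))) ^ 2 ∂P :=
      integral_nonneg fun ω => sq_nonneg _
    linarith
  -- assemble
  refine ⟨part1, ?_, ?_⟩
  · intro s x
    rw [part1 s]
    have hx : x - (μv s - μbar) = x - μv s + μbar := by
      funext j
      simp only [Pi.sub_apply, Pi.add_apply]
      ring
    rw [hx]
  · intro a b
    have hpt : ∀ ω, αF + βF ⬝ᵥ (X ω - Mᵀ *ᵥ (fun i => Uq i (S ω))) - Y ω
        = Ybar + βF ⬝ᵥ (X ω - μv (S ω)) - Y ω := by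
      intro ω
      rw [part1 (S ω)]
      have hx : X ω - (μv (S ω) - μbar) = (X ω - μv (S ω)) + μbar := by
        funext j
        simp only [Pi.sub_apply, Pi.add_apply]
        ring
      rw [hx, dotProduct_add, hαF]
      ring
    simp only [hpt]
    exact hmain a b
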